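/- Let A = {(x, y, z) ∈ ℝ³ : z ≥ x² + y⁴} and B = {(x, y, 0) : (x, y) ∈ ℝ²}. Let {(x_k, y_k)} ⊆ ℝ² be defined by (x_{k+1}, y_{k+1}, 0) = P_B(P_A((x_k, y_k, 0))) for k = 0, 1, 2, …. If y_0 = 0 and x_0 ≠ 0, then lim_{k→∞} 2 k^{1/2} ‖(x_k, y_k)‖ = 1; in particular ‖(x_k, y_k)‖ = Θ(k^{−1/2}) as k → ∞. -/

import Mathlib

set_option maxHeartbeats 1000000

open Filter

/-- `u` is the metric projection of `p` onto `S`. -/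
def IsMetricProj {E : Type*} [NormedAddCommGroup E] (S : Set E) (p u : E) : Prop :=
  u ∈ S ∧ ∀ s ∈ S, ‖u - p‖ ≤ ‖s - p‖

/-- The point (a, b, c) of Euclidean 3-space. -/
noncomputable def e3 (a b c : ℝ) : EuclideanSpace ℝ (Fin 3) :=
  (WithLp.equiv 2 (Fin 3 → ℝ)).symm ![a, b, c]

@[simp] lemma e3_apply0 (a b c : ℝ) : e3 a b c 0 = a := rfl
@[simp] lemma e3_apply1 (a b c : ℝ) : e3 a b c 1 = b := rfl
@[simp] lemma e3_apply2 (a b c : ℝ) : e3 a b c 2 = c := rfl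

lemma norm3 (p q : EuclideanSpace ℝ (Fin 3)) :
    ‖p - q‖ = Real.sqrt ((p 0 - q 0)^2 + (p 1 - q 1)^2 + (p 2 - q 2)^2) := by
  rw [EuclideanSpace.norm_eq, Fin.sum_univ_three]
  simp [Real.norm_eq_abs, sq_abs]

lemma norm3_le {p q r : EuclideanSpace ℝ (Fin 3)}
    (h : ‖p - r‖ ≤ ‖q - r‖) :
    (p 0 - r 0)^2 + (p 1 - r 1)^2 + (p 2 - r 2)^2 ≤
      (q 0 - r 0)^2 + (q 1 - r 1)^2 + (q 2 - r 2)^2 := by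
  rw [norm3, norm3] at h
  exact (Real.sqrt_le_sqrt_iff (by positivity)).mp h

lemma projA (xk : ℝ) (w : EuclideanSpace ℝ (Fin 3)) (h1 : w 0 ^2 + w 1 ^4 ≤ w 2)
    (h2 : ∀ s : EuclideanSpace ℝ (Fin 3), s 0 ^2 + s 1 ^4 ≤ s 2 →
      ‖w - e3 xk 0 0‖ ≤ ‖s - e3 xk 0 0‖) :
    w 1 = 0 ∧ w 2 = (w 0)^2 ∧ w 0 + 2*(w 0)^3 = xk := by
  set a := w 0 with ha
  set b := w 1 with hb
  set c := w 2 with hc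
  -- step 1 : c = a^2 + b^4
  have hs1 : (e3 a b (a^2+b^4)) 0 ^2 + (e3 a b (a^2+b^4)) 1 ^4 ≤ (e3 a b (a^2+b^4)) 2 := by
    simp
  have k1 := norm3_le (h2 _ hs1)
  simp only [e3_apply0, e3_apply1, e3_apply2, ← ha, ← hb, ← hc] at k1
  have k1' : c^2 ≤ (a^2+b^4)^2 := by nlinarith [k1]
  have hs0 : (0:ℝ) ≤ a^2 + b^4 := by positivity
  have hc0 : (0:ℝ) ≤ c := le_trans hs0 h1
  have hcv : c = a^2 + b^4 :=
    le_antisymm ((pow_le_pow_iff_left₀ hc0 hs0 (by norm_num)).mp k1') h1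
  -- step 2 : b = 0
  have hs2 : (e3 a 0 (a^2)) 0 ^2 + (e3 a 0 (a^2)) 1 ^4 ≤ (e3 a 0 (a^2)) 2 := by simp
  have k2 := norm3_le (h2 _ hs2)
  simp only [e3_apply0, e3_apply1, e3_apply2, ← ha, ← hb, ← hc] at k2
  have hb0 : b = 0 := by nlinarith [sq_nonneg b, sq_nonneg (b^2), sq_nonneg a, sq_nonneg (a^2)]
  have hca : c = a^2 := by rw [hcv, hb0]; ring
  refine ⟨hb0, hca, ?_⟩
  -- step 3 : global min of h t = (t-xk)^2 + t^4 at a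
  have hglob : ∀ t : ℝ, (a - xk)^2 + a^4 ≤ (t - xk)^2 + t^4 := by
    intro t
    have hst : (e3 t 0 (t^2)) 0 ^2 + (e3 t 0 (t^2)) 1 ^4 ≤ (e3 t 0 (t^2)) 2 := by simp
    have k3 := norm3_le (h2 _ hst)
    simp only [e3_apply0, e3_apply1, e3_apply2, ← ha, ← hb, ← hc] at k3
    nlinarith [k3]
  have hmin : IsLocalMin (fun t : ℝ => (t - xk)^2 + t^4) a :=
    Filter.Eventually.of_forall hglob
  have hd : HasDerivAt (fun t : ℝ => (t - xk)^2 + t^4) (2*(a-xk) + 4*a^3) a := by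
    have d1 := ((hasDerivAt_id a).sub_const xk).pow 2
    have d2 := (hasDerivAt_id a).pow 4
    refine (d1.add d2).congr_deriv ?_
    simp only [id_eq]
    norm_num
  have := hmin.hasDerivAt_eq_zero hd
  nlinarith [this]

lemma projB (w v : EuclideanSpace ℝ (Fin 3)) (h1 : v 2 = 0)
    (h2 : ∀ s : EuclideanSpace ℝ (Fin 3), s 2 = 0 → ‖v - w‖ ≤ ‖s - w‖) :
    v 0 = w 0 ∧ v 1 = w 1 := by
  have k := norm3_le (h2 (e3 (w 0) (w 1) 0) (by simp))
  simp only [e3_apply0, e3_apply1, e3_apply2, h1] at k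
  constructor <;> nlinarith [sq_nonneg (v 0 - w 0), sq_nonneg (v 1 - w 1)]

lemma asymp (u : ℕ → ℝ) (hu : ∀ k, 0 < u k)
    (hrec : ∀ k, u (k+1) + 2*(u (k+1))^3 = u k) :
    Tendsto (fun k : ℕ => 2 * Real.sqrt k * u k) atTop (nhds 1) := by
  have hle : ∀ k, u (k+1) ≤ u k := fun k => by nlinarith [hrec k, pow_pos (hu (k+1)) 3]
  have hanti : Antitone u := antitone_nat_of_succ_le hle
  have hbdd : BddBelow (Set.range u) := ⟨0, fun r ⟨k, hk⟩ => hk ▸ (hu k).le⟩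
  have hL : Tendsto u atTop (nhds (⨅ i, u i)) := tendsto_atTop_ciInf hanti hbdd
  set L := ⨅ i, u i with hLdef
  have hLrec : L + 2*L^3 = L := by
    have h1 : Tendsto (fun k => u (k+1)) atTop (nhds L) :=
      hL.comp (tendsto_add_atTop_nat 1)
    have h2 : Tendsto (fun k => u (k+1) + 2*(u (k+1))^3) atTop (nhds (L + 2*L^3)) := by
      exact h1.add ((h1.pow 3).const_mul 2)
    have h3 : Tendsto (fun k => u (k+1) + 2*(u (k+1))^3) atTop (nhds L) := by
      simp only [hrec]; exact hL
    exact tendsto_nhds_unique h2 h3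
  have hL0 : L = 0 := by
    have : L^3 = 0 := by linarith
    exact pow_eq_zero_iff (by norm_num) |>.mp this
  rw [hL0] at hL
  have hu1 : Tendsto (fun k => u (k+1)) atTop (nhds 0) := hL.comp (tendsto_add_atTop_nat 1)
  set v : ℕ → ℝ := fun k => (u k)⁻¹^2 with hv
  have hne : ∀ k, u k ≠ 0 := fun k => (hu k).ne'
  have hdval : ∀ k, v (k+1) - v k = 4*(1 + (u (k+1))^2)/(1 + 2*(u (k+1))^2)^2 := by
    intro k
    have h := hrec k
    have hden : (1 + 2*(u (k+1))^2) ≠ 0 := by positivity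
    simp only [hv]
    rw [← h]
    have hk1 := hne (k+1)
    field_simp
    ring
  have hdlim : Tendsto (fun k => v (k+1) - v k) atTop (nhds 4) := by
    simp only [hdval]
    have hnum : Tendsto (fun k => 4*(1 + (u (k+1))^2)) atTop (nhds 4) := by
      have := ((hu1.pow 2).const_add 1).const_mul 4
      simpa using this
    have hden : Tendsto (fun k => (1 + 2*(u (k+1))^2)^2) atTop (nhds 1) := by
      have := (((hu1.pow 2).const_mul 2).const_add 1).pow 2
      simpa using this
    have := hnum.div hden (by norm_num)
    rw [div_one] at this
    exact this
  have hces := hdlim.cesaro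
  have htel : ∀ n, ∑ i ∈ Finset.range n, (v (i+1) - v i) = v n - v 0 :=
    fun n => Finset.sum_range_sub v n
  have hces2 : Tendsto (fun n : ℕ => (n:ℝ)⁻¹ * (v n - v 0)) atTop (nhds 4) := by
    simpa only [htel] using hces
  have hz : Tendsto (fun n : ℕ => (n:ℝ)⁻¹ * v 0) atTop (nhds 0) := by
    simpa using tendsto_inv_atTop_zero.comp tendsto_natCast_atTop_atTop |>.mul_const (v 0)
  have hces3 : Tendsto (fun n : ℕ => (n:ℝ)⁻¹ * v n) atTop (nhds 4) := by
    have := hces2.add hz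
    norm_num at this
    convert this using 2 with n
    ring
  have hinv : Tendsto (fun n : ℕ => ((n:ℝ)⁻¹ * v n)⁻¹) atTop (nhds 4⁻¹) :=
    hces3.inv₀ (by norm_num)
  have hmain : Tendsto (fun n : ℕ => (n:ℝ) * (u n)^2) atTop (nhds (1/4)) := by
    rw [show (1/4:ℝ) = 4⁻¹ by norm_num]
    apply Filter.Tendsto.congr' _ hinv
    filter_upwards [eventually_ge_atTop 1] with n hn
    have hn' : (n:ℝ) ≠ 0 := by positivity
    field_simp [hv, hne n]
    simp only [hv]
    rw [inv_pow, inv_mul_cancel₀ (pow_ne_zero 2 (hne n))]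
  have hsq : Tendsto (fun n : ℕ => Real.sqrt ((n:ℝ) * (u n)^2)) atTop (nhds (Real.sqrt (1/4))) :=
    (Real.continuous_sqrt.continuousAt).tendsto.comp hmain
  have hsqval : Real.sqrt (1/4 : ℝ) = 1/2 := by
    rw [show (1/4:ℝ) = (1/2)^2 by norm_num, Real.sqrt_sq (by norm_num)]
  rw [hsqval] at hsq
  have hsq2 : Tendsto (fun n : ℕ => Real.sqrt (n:ℝ) * u n) atTop (nhds (1/2)) := by
    apply hsq.congr
    intro n
    rw [Real.sqrt_mul (Nat.cast_nonneg n), Real.sqrt_sq (hu n).le]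
  have := hsq2.const_mul 2
  norm_num at this
  convert this using 2 with n
  ring

theorem stmt17 (A B : Set (EuclideanSpace ℝ (Fin 3)))
    (hA : A = {p | p 0 ^ 2 + p 1 ^ 4 ≤ p 2})
    (hB : B = {p : EuclideanSpace ℝ (Fin 3) | p 2 = 0})
    (x y : ℕ → ℝ)
    (hstep : ∀ k, ∃ w, IsMetricProj A (e3 (x k) (y k) 0) w ∧
      IsMetricProj B w (e3 (x (k + 1)) (y (k + 1)) 0))
    (hy0 : y 0 = 0) (hx0 : x 0 ≠ 0) :
    Tendsto (fun k : ℕ => 2 * (k : ℝ) ^ ((1 : ℝ) / 2) * Real.sqrt (x k ^ 2 + y k ^ 2))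
      atTop (nhds 1) ∧
    ∃ C₁ C₂ : ℝ, ∃ K : ℕ, 0 < C₁ ∧ C₁ ≤ C₂ ∧ ∀ k ≥ K,
      C₁ * (k : ℝ) ^ (-(1 : ℝ) / 2) ≤ Real.sqrt (x k ^ 2 + y k ^ 2) ∧
      Real.sqrt (x k ^ 2 + y k ^ 2) ≤ C₂ * (k : ℝ) ^ (-(1 : ℝ) / 2) := by
  subst hA hB
  have key : ∀ k, y k = 0 → (y (k+1) = 0 ∧ x (k+1) + 2*(x (k+1))^3 = x k) := by
    intro k hyk
    obtain ⟨w, ⟨hwA1, hwA2⟩, hwB1, hwB2⟩ := hstep k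
    have hA' := projA (x k) w hwA1 (by
      intro s hs
      have := hwA2 s hs
      rwa [hyk] at this)
    obtain ⟨hw1, hw2, hwrec⟩ := hA'
    have hB' := projB w (e3 (x (k+1)) (y (k+1)) 0) (by simp) hwB2
    simp only [e3_apply0, e3_apply1] at hB'
    obtain ⟨hx', hy'⟩ := hB'
    refine ⟨by rw [hy', hw1], ?_⟩
    rw [hx']
    exact hwrec
  have hy : ∀ k, y k = 0 := by
    intro k
    induction k with
    | zero => exact hy0
    | succ n ih => exact (key n ih).1
  have hrecx : ∀ k, x (k+1) + 2*(x (k+1))^3 = x k := fun k => (key k (hy k)).2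
  have hxne : ∀ k, x k ≠ 0 := by
    intro k
    induction k with
    | zero => exact hx0
    | succ n ih =>
      intro h
      apply ih
      rw [← hrecx n, h]
      ring
  set u : ℕ → ℝ := fun k => |x k| with hu
  have hupos : ∀ k, 0 < u k := fun k => abs_pos.2 (hxne k)
  have hurec : ∀ k, u (k+1) + 2*(u (k+1))^3 = u k := by
    intro k
    have h := hrecx k
    simp only [hu]
    rcases abs_cases (x (k+1)) with ⟨h1, h2⟩ | ⟨h1, h2⟩
    · have hxk : 0 ≤ x k := by nlinarith [pow_nonneg h2 3]
      rw [h1, abs_of_nonneg hxk, ← h]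
    · have hxk : x k ≤ 0 := by nlinarith [pow_nonneg (neg_nonneg.2 h2.le) 3]
      rw [h1, abs_of_nonpos hxk, ← h]
      ring
  have T := asymp u hupos hurec
  have heq : ∀ k, Real.sqrt (x k ^ 2 + y k ^ 2) = u k := by
    intro k
    rw [hy k]
    simp [hu, Real.sqrt_sq_eq_abs]
  have hfun : (fun k : ℕ => 2 * (k:ℝ) ^ ((1:ℝ)/2) * Real.sqrt (x k ^ 2 + y k ^ 2))
      = fun k : ℕ => 2 * Real.sqrt k * u k := by
    funext k
    rw [heq k, ← Real.sqrt_eq_rpow]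
  refine ⟨hfun ▸ T, ?_⟩
  have hev := T (Icc_mem_nhds (show (1:ℝ)/2 < 1 by norm_num) (show (1:ℝ) < 3/2 by norm_num))
  rw [Filter.mem_map, Filter.mem_atTop_sets] at hev
  obtain ⟨K0, hK0⟩ := hev
  refine ⟨1/4, 3/4, max K0 1, by norm_num, by norm_num, ?_⟩
  intro k hk
  have hk0 : k ≥ K0 := le_trans (le_max_left _ _) hk
  have hk1 : k ≥ 1 := le_trans (le_max_right _ _) hk
  have hkpos : (0:ℝ) < k := by exact_mod_cast Nat.lt_of_lt_of_le Nat.zero_lt_one hk1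
  have hs : 0 < Real.sqrt k := Real.sqrt_pos.2 hkpos
  have hrpow : (k:ℝ) ^ (-(1:ℝ)/2) = (Real.sqrt k)⁻¹ := by
    rw [show (-(1:ℝ)/2) = -((1:ℝ)/2) by ring, Real.rpow_neg (Nat.cast_nonneg k),
      ← Real.sqrt_eq_rpow]
  obtain ⟨hlo, hhi⟩ := Set.mem_Icc.mp (hK0 k hk0)
  rw [heq k, hrpow]
  constructor
  · rw [show (1/4:ℝ) * (Real.sqrt k)⁻¹ = (1/4) / Real.sqrt k by ring,
      div_le_iff₀ hs]
    nlinarith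
  · rw [show (3/4:ℝ) * (Real.sqrt k)⁻¹ = (3/4) / Real.sqrt k by ring,
      le_div_iff₀ hs]
    nlinarith
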